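/- For any BN F on n nodes that is observable with an observation set S of size m, every state a : Fin n → Bool satisfies |{x : Fin n → Bool | F x = a}| ≤ 2^m (i.e., 2^m ≥ max_a COUNT(a)). -/
import Mathlib


/-- `F` is observable with observation set `S` if the map from an initial state to its
output sequence (the restriction of each iterate to `S`) is injective. -/
def observable {n : ℕ} (F : (Fin n → Bool) → (Fin n → Bool)) (S : Finset (Fin n)) : Prop :=
  Function.Injective (fun (x : Fin n → Bool) => fun (t : ℕ) (i : S) => (F^[t] x) i.val)

theorem count_preimages_le (n m : ℕ) (F : (Fin n → Bool) → (Fin n → Bool))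
    (S : Finset (Fin n)) (hS : S.card = m) (hobs : observable F S)
    (a : Fin n → Bool) :
    (Finset.univ.filter (fun x : Fin n → Bool => F x = a)).card ≤ 2 ^ m := by
  have key : ∀ x ∈ Finset.univ.filter (fun x : Fin n → Bool => F x = a),
      ∀ y ∈ Finset.univ.filter (fun x : Fin n → Bool => F x = a),
      (fun i : S => x i.val) = (fun i : S => y i.val) → x = y := by
    intro x hx y hy hxy
    simp only [Finset.mem_filter] at hx hy
    apply hobs
    funext t i
    cases t with
    | zero => simpa using congrFun hxy i
    | succ t =>
      simp only [Function.iterate_succ_apply, hx.2, hy.2]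
  calc (Finset.univ.filter (fun x : Fin n → Bool => F x = a)).card
      ≤ (Finset.univ : Finset (S → Bool)).card :=
        Finset.card_le_card_of_injOn (fun x i => x i.val) (fun _ _ => Finset.mem_univ _) key
    _ = 2 ^ m := by
        simp [Finset.card_univ, Fintype.card_fun, hS]
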